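/- min{𝔡, 𝔯} = min{𝔡, 𝔲}. -/

import Mathlib

open Filter Set Cardinal

/-- The dominating number `𝔡`. -/
noncomputable def frakD : Cardinal :=
  sInf { κc : Cardinal | ∃ D : Set (ℕ → ℕ), #D = κc ∧
    ∀ f : ℕ → ℕ, ∃ g ∈ D, ∀ᶠ n in atTop, f n ≤ g n }

/-- The reaping number `𝔯`. -/
noncomputable def frakR : Cardinal :=
  sInf { κc : Cardinal | ∃ R : Set (Set ℕ), #R = κc ∧ (∀ a ∈ R, a.Infinite) ∧
    ∀ x : Set ℕ, ∃ a ∈ R, (a \ x).Finite ∨ (a ∩ x).Finite }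

/-- The ultrafilter number `𝔲`: the least cardinality of a base of a
nonprincipal ultrafilter on `ℕ`. -/
noncomputable def frakU : Cardinal :=
  sInf { κc : Cardinal | ∃ (u : Ultrafilter ℕ) (B : Set (Set ℕ)), #B = κc ∧
    (∀ s ∈ u, s.Infinite) ∧ (∀ b ∈ B, b ∈ u) ∧ ∀ s ∈ u, ∃ b ∈ B, b ⊆ s }

/-! ### Auxiliary machinery -/

/-- The least element of `a` strictly greater than `n`. -/
noncomputable def nxt (a : Set ℕ) (n : ℕ) : ℕ := sInf {m | m ∈ a ∧ n < m}

lemma infinite_exists_gt {a : Set ℕ} (ha : a.Infinite) (n : ℕ) :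
    ∃ m, m ∈ a ∧ n < m := by
  by_contra h
  push_neg at h
  exact ha ((Set.finite_Iic n).subset fun m hm => Set.mem_Iic.mpr (h m hm))

lemma nxt_mem {a : Set ℕ} (ha : a.Infinite) (n : ℕ) : nxt a n ∈ a ∧ n < nxt a n :=
  Nat.sInf_mem (infinite_exists_gt ha n)

lemma nxt_mono {a : Set ℕ} (ha : a.Infinite) {n m : ℕ} (h : n ≤ m) :
    nxt a n ≤ nxt a m :=
  Nat.sInf_le ⟨(nxt_mem ha m).1, lt_of_le_of_lt h (nxt_mem ha m).2⟩

/-- One step: go beyond `n` and beyond the next element of each member of `E`. -/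
noncomputable def stepE {R : Set (Set ℕ)} (E : Finset ↥R) (n : ℕ) : ℕ :=
  n + 1 + E.sup (fun a => nxt (↑a : Set ℕ) n)

lemma lt_stepE {R : Set (Set ℕ)} (E : Finset ↥R) (n : ℕ) : n < stepE E n := by
  unfold stepE; omega

lemma nxt_le_stepE {R : Set (Set ℕ)} {E : Finset ↥R} {a : ↥R} (ha : a ∈ E) (n : ℕ) :
    nxt (↑a : Set ℕ) n ≤ stepE E n := by
  have : nxt (↑a : Set ℕ) n ≤ E.sup (fun a => nxt (↑a : Set ℕ) n) :=
    Finset.le_sup (f := fun a : ↥R => nxt (↑a : Set ℕ) n) ha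
  unfold stepE; omega

lemma stepE_mono {R : Set (Set ℕ)} (hinf : ∀ a ∈ R, a.Infinite) (E : Finset ↥R) :
    Monotone (stepE E) := by
  intro n m hnm
  have h : E.sup (fun a => nxt (↑a : Set ℕ) n) ≤ E.sup (fun a => nxt (↑a : Set ℕ) m) :=
    Finset.sup_mono_fun (fun a _ => nxt_mono (hinf ↑a a.2) hnm)
  unfold stepE; omega

/-- The derived function used against dominating families. -/
noncomputable def hfE {R : Set (Set ℕ)} (E : Finset ↥R) : ℕ → ℕ := (stepE E)^[4]

lemma hfE_mono {R : Set (Set ℕ)} (hinf : ∀ a ∈ R, a.Infinite) (E : Finset ↥R) :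
    Monotone (hfE E) := (stepE_mono hinf E).iterate 4

/-- A strictly increasing majorant of `f`. -/
noncomputable def bump (f : ℕ → ℕ) (n : ℕ) : ℕ := n + 1 + (Finset.range (n + 1)).sup f

lemma lt_bump (f : ℕ → ℕ) (n : ℕ) : n < bump f n := by unfold bump; omega

lemma apply_lt_bump (f : ℕ → ℕ) (n : ℕ) : f n < bump f n := by
  have : f n ≤ (Finset.range (n + 1)).sup f := Finset.le_sup (Finset.self_mem_range_succ n)
  unfold bump; omega

lemma bump_mono (f : ℕ → ℕ) : Monotone (bump f) := by
  intro n m h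
  have : (Finset.range (n + 1)).sup f ≤ (Finset.range (m + 1)).sup f :=
    Finset.sup_mono (Finset.range_subset_range.mpr (by omega))
  unfold bump; omega

/-- The interval endpoints built from `f`. -/
noncomputable def tseq (f : ℕ → ℕ) (i : ℕ) : ℕ := (bump f)^[i] 0

lemma tseq_zero (f : ℕ → ℕ) : tseq f 0 = 0 := rfl

lemma tseq_succ (f : ℕ → ℕ) (i : ℕ) : tseq f (i + 1) = bump f (tseq f i) :=
  Function.iterate_succ_apply' _ _ _

lemma tseq_strictMono (f : ℕ → ℕ) : StrictMono (tseq f) :=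
  strictMono_nat_of_lt_succ (fun i => by rw [tseq_succ]; exact lt_bump f _)

lemma le_tseq (f : ℕ → ℕ) : ∀ i, i ≤ tseq f i := by
  intro i
  induction i with
  | zero => simp [tseq_zero]
  | succ i ih => rw [tseq_succ]; have h := lt_bump f (tseq f i); omega

/-- Index of the interval `[tseq f i, tseq f (i+1))` containing `m`. -/
noncomputable def sIdx (f : ℕ → ℕ) (m : ℕ) : ℕ :=
  Nat.findGreatest (fun i => tseq f i ≤ m) m

/-- Index of the double block `[tseq f (2i), tseq f (2i+2))` containing `m`. -/
noncomputable def bIdx (f : ℕ → ℕ) (m : ℕ) : ℕ :=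
  Nat.findGreatest (fun i => tseq f (2 * i) ≤ m) m

lemma sIdx_le (f : ℕ → ℕ) (m : ℕ) : tseq f (sIdx f m) ≤ m := by
  unfold sIdx
  exact Nat.findGreatest_spec (P := fun i => tseq f i ≤ m) (m := 0) (Nat.zero_le m)
    (Nat.zero_le m)

lemma lt_sIdx_succ (f : ℕ → ℕ) (m : ℕ) : m < tseq f (sIdx f m + 1) := by
  by_contra hcon
  push_neg at hcon
  have h2 : sIdx f m + 1 ≤ m := le_trans (le_tseq f _) hcon
  have h3 : sIdx f m + 1 ≤ sIdx f m := Nat.le_findGreatest h2 hcon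
  omega

lemma bIdx_le (f : ℕ → ℕ) (m : ℕ) : tseq f (2 * bIdx f m) ≤ m := by
  unfold bIdx
  exact Nat.findGreatest_spec (P := fun i => tseq f (2 * i) ≤ m) (m := 0) (Nat.zero_le m)
    (Nat.zero_le m)

lemma lt_bIdx_succ (f : ℕ → ℕ) (m : ℕ) : m < tseq f (2 * bIdx f m + 2) := by
  by_contra hcon
  push_neg at hcon
  have he : 2 * (bIdx f m + 1) = 2 * bIdx f m + 2 := by ring
  have hP : tseq f (2 * (bIdx f m + 1)) ≤ m := by rw [he]; exact hcon
  have h2 : bIdx f m + 1 ≤ m := by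
    have := le_tseq f (2 * (bIdx f m + 1))
    omega
  have h3 : bIdx f m + 1 ≤ bIdx f m := Nat.le_findGreatest h2 hP
  omega

lemma bIdx_eq (f : ℕ → ℕ) {m i : ℕ} (h1 : tseq f (2 * i) ≤ m)
    (h2 : m < tseq f (2 * i + 2)) : bIdx f m = i := by
  rcases lt_trichotomy (bIdx f m) i with h | h | h
  · exfalso
    have hmono : tseq f (2 * bIdx f m + 2) ≤ tseq f (2 * i) :=
      (tseq_strictMono f).monotone (by omega)
    have := lt_bIdx_succ f m
    omega
  · exact h
  · exfalso
    have hmono : tseq f (2 * i + 2) ≤ tseq f (2 * bIdx f m) :=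
      (tseq_strictMono f).monotone (by omega)
    have := bIdx_le f m
    omega

/-- The candidate filter generated by images of members of `R` under `g`. -/
def Fcand (R : Set (Set ℕ)) (g : ℕ → ℕ) : Filter ℕ where
  sets := {x | ∃ E : Finset ↥R, ∃ n : ℕ,
    (⋂ a ∈ E, g '' (↑a : Set ℕ)) \ Set.Iio n ⊆ x}
  univ_sets := ⟨∅, 0, Set.subset_univ _⟩
  sets_of_superset := by
    rintro x y ⟨E, n, h⟩ hxy
    exact ⟨E, n, h.trans hxy⟩
  inter_sets := by
    classical
    rintro x y ⟨E1, n1, h1⟩ ⟨E2, n2, h2⟩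
    refine ⟨E1 ∪ E2, max n1 n2, fun i hi => ?_⟩
    obtain ⟨hiI, hin⟩ := hi
    rw [Set.mem_iInter₂] at hiI
    simp only [Set.mem_Iio, not_lt] at hin
    constructor
    · refine h1 ⟨Set.mem_iInter₂.mpr (fun a ha => hiI a (Finset.mem_union_left _ ha)), ?_⟩
      simp only [Set.mem_Iio, not_lt]
      omega
    · refine h2 ⟨Set.mem_iInter₂.mpr (fun a ha => hiI a (Finset.mem_union_right _ ha)), ?_⟩
      simp only [Set.mem_Iio, not_lt]
      omega

lemma mem_Fcand {R : Set (Set ℕ)} {g : ℕ → ℕ} {x : Set ℕ} :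
    x ∈ Fcand R g ↔ ∃ E : Finset ↥R, ∃ n : ℕ,
      (⋂ a ∈ E, g '' (↑a : Set ℕ)) \ Set.Iio n ⊆ x := Iff.rfl

/-- There is no finite reaping family. -/
lemma no_finite_reaping (R : Set (Set ℕ)) (hfin : R.Finite)
    (hinf : ∀ a ∈ R, a.Infinite)
    (hreap : ∀ x : Set ℕ, ∃ a ∈ R, (a \ x).Finite ∨ (a ∩ x).Finite) : False := by
  classical
  set T := hfin.toFinset with hT
  set st : ℕ → ℕ := fun n => n + 1 + T.sup (fun a => nxt a n) with hst
  have hst_gt : ∀ n, n < st n := by intro n; simp only [hst]; omega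
  set v : ℕ → ℕ := fun r => st^[r] 0 with hv
  have hv_succ : ∀ r, v (r + 1) = st (v r) := fun r => Function.iterate_succ_apply' _ _ _
  have hv_mono : StrictMono v :=
    strictMono_nat_of_lt_succ (fun r => by rw [hv_succ]; exact hst_gt _)
  have hv_ge : ∀ r, r ≤ v r := by
    intro r
    induction r with
    | zero => exact Nat.zero_le _
    | succ r ih => rw [hv_succ]; have := hst_gt (v r); omega
  set x : Set ℕ := {m | ∃ r, v (2 * r) < m ∧ m ≤ v (2 * r + 1)} with hx
  obtain ⟨a, haR, hcase⟩ := hreap x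
  have hainf := hinf a haR
  have haT : a ∈ T := hfin.mem_toFinset.mpr haR
  have hnxt_le : ∀ n, nxt a n ≤ st n := by
    intro n
    have : nxt a n ≤ T.sup (fun b => nxt b n) := Finset.le_sup (f := fun b : Set ℕ => nxt b n) haT
    simp only [hst]; omega
  have key1 : ∀ r, ∃ p, p ∈ a ∧ p ∈ x ∧ v (2 * r) < p := by
    intro r
    refine ⟨nxt a (v (2 * r)), (nxt_mem hainf _).1, ?_, (nxt_mem hainf _).2⟩
    refine ⟨r, (nxt_mem hainf _).2, ?_⟩
    have h1 : v (2 * r + 1) = st (v (2 * r)) := hv_succ _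
    rw [h1]
    exact hnxt_le _
  have key2 : ∀ r, ∃ p, p ∈ a ∧ p ∉ x ∧ v (2 * r + 1) < p := by
    intro r
    refine ⟨nxt a (v (2 * r + 1)), (nxt_mem hainf _).1, ?_, (nxt_mem hainf _).2⟩
    rintro ⟨s, hs1, hs2⟩
    have hp_le : nxt a (v (2 * r + 1)) ≤ v (2 * r + 2) := by
      have h1 : v (2 * r + 2) = st (v (2 * r + 1)) := hv_succ _
      rw [h1]
      exact hnxt_le _
    have hgt := (nxt_mem hainf (v (2 * r + 1))).2
    rcases le_or_gt s r with h | h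
    · have : v (2 * s + 1) ≤ v (2 * r + 1) := hv_mono.monotone (by omega)
      omega
    · have : v (2 * r + 2) ≤ v (2 * s) := hv_mono.monotone (by omega)
      omega
  rcases hcase with hc | hc
  · obtain ⟨bd, hbd⟩ := hc.bddAbove
    obtain ⟨p, hp1, hp2, hp3⟩ := key2 bd
    have hple : p ≤ bd := hbd ⟨hp1, hp2⟩
    have : bd ≤ 2 * bd + 1 := by omega
    have := hv_ge (2 * bd + 1)
    omega
  · obtain ⟨bd, hbd⟩ := hc.bddAbove
    obtain ⟨p, hp1, hp2, hp3⟩ := key1 bd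
    have hple : p ≤ bd := hbd ⟨hp1, hp2⟩
    have : bd ≤ 2 * bd := by omega
    have := hv_ge (2 * bd)
    omega

/-- The key lemma (Aubrey): a reaping family of size `< 𝔡` gives a small
ultrafilter base. -/
lemma key_lemma (R : Set (Set ℕ)) (hinf : ∀ a ∈ R, a.Infinite)
    (hreap : ∀ x : Set ℕ, ∃ a ∈ R, (a \ x).Finite ∨ (a ∩ x).Finite)
    (hRD : #R < frakD) : frakU ≤ #R := by
  classical
  have hRinf : R.Infinite := by
    by_contra hfin
    rw [Set.not_infinite] at hfin
    exact no_finite_reaping R hfin hinf hreap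
  haveI : Infinite ↥R := hRinf.to_subtype
  -- escape function
  obtain ⟨f, hf⟩ : ∃ f : ℕ → ℕ, ∀ E : Finset ↥R, ∃ᶠ n in atTop, hfE E n < f n := by
    by_contra hcon
    push_neg at hcon
    have hdom : ∀ fx : ℕ → ℕ, ∃ g ∈ Set.range (fun E : Finset ↥R => hfE E),
        ∀ᶠ n in atTop, fx n ≤ g n := by
      intro fx
      obtain ⟨E, hEc⟩ := hcon fx
      refine ⟨hfE E, ⟨E, rfl⟩, ?_⟩
      exact hEc.mono (fun n hn => by omega)
    have h1 : frakD ≤ #(Set.range (fun E : Finset ↥R => hfE E)) :=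
      csInf_le' ⟨_, rfl, hdom⟩
    have h2 : #(Set.range (fun E : Finset ↥R => hfE E)) ≤ #(Finset ↥R) :=
      Cardinal.mk_range_le
    have h3 : #(Finset ↥R) = #↥R := Cardinal.mk_finset_of_infinite ↥R
    exact absurd (h1.trans (h2.trans_eq h3)) (not_le.mpr hRD)
  -- blocks: for every finite E, infinitely many double blocks meet every member of E
  have hblk : ∀ E : Finset ↥R, ∀ N : ℕ, ∃ i, N ≤ i ∧
      ∀ a : ↥R, a ∈ E →
        ((↑a : Set ℕ) ∩ Set.Ico (tseq f (2 * i)) (tseq f (2 * i + 2))).Nonempty := by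
    intro E N
    obtain ⟨n, hnge, hesc⟩ := Filter.frequently_atTop.mp (hf E) (tseq f (2 * N + 2) + 1)
    have hj1 : tseq f (sIdx f n) ≤ n := sIdx_le f n
    have hj2 : n < tseq f (sIdx f n + 1) := lt_sIdx_succ f n
    set j := sIdx f n with hjdef
    have hjN : 2 * N + 2 ≤ j := by
      have h1 : tseq f (2 * N + 2) < tseq f (j + 1) := by omega
      have h2 : 2 * N + 2 < j + 1 := (tseq_strictMono f).lt_iff_lt.mp h1
      omega
    have hchain : hfE E (tseq f j) < tseq f (j + 2) := by
      have e1 : tseq f (j + 2) = bump f (tseq f (j + 1)) := tseq_succ f (j + 1)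
      have e2 : bump f n ≤ bump f (tseq f (j + 1)) := bump_mono f (by omega)
      have e3 : f n < bump f n := apply_lt_bump f n
      have e4 : hfE E (tseq f j) ≤ hfE E n := hfE_mono hinf E hj1
      omega
    set u : ℕ → ℕ := fun r => (stepE E)^[r] (tseq f j) with hu
    have hu0 : u 0 = tseq f j := rfl
    have hu_succ : ∀ r, u (r + 1) = stepE E (u r) :=
      fun r => Function.iterate_succ_apply' _ _ _
    have hu4 : u 4 = hfE E (tseq f j) := rfl
    have hu_lt : ∀ r, u r < u (r + 1) := fun r => by rw [hu_succ]; exact lt_stepE E _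
    have hu01 : u 0 < u 1 := hu_lt 0
    have hu12 : u 1 < u 2 := hu_lt 1
    have hu23 : u 2 < u 3 := hu_lt 2
    have hu34 : u 3 < u 4 := hu_lt 3
    have hpt : ∀ r, ∀ a : ↥R, a ∈ E →
        ∃ p, p ∈ (↑a : Set ℕ) ∧ u r < p ∧ p ≤ u (r + 1) := by
      intro r a ha
      have hainf := hinf ↑a a.2
      refine ⟨nxt (↑a : Set ℕ) (u r), (nxt_mem hainf _).1, (nxt_mem hainf _).2, ?_⟩
      rw [hu_succ]
      exact nxt_le_stepE ha _
    rcases Nat.even_or_odd j with ⟨i, hi⟩ | ⟨i, hi⟩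
    · -- j = i + i
      refine ⟨i, by omega, fun a ha => ?_⟩
      obtain ⟨p, hp1, hp2, hp3⟩ := hpt 0 a ha
      have hp3' : p ≤ u 1 := hp3
      refine ⟨p, hp1, ?_⟩
      rw [Set.mem_Ico]
      have e1 : 2 * i = j := by omega
      have e2 : 2 * i + 2 = j + 2 := by omega
      rw [e2, e1]
      constructor <;> omega
    · -- j = 2 * i + 1
      by_cases hcut : tseq f (j + 1) ≤ u 2
      · refine ⟨i + 1, by omega, fun a ha => ?_⟩
        obtain ⟨p, hp1, hp2, hp3⟩ := hpt 2 a ha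
        have hp3' : p ≤ u 3 := hp3
        refine ⟨p, hp1, ?_⟩
        rw [Set.mem_Ico]
        have e1 : 2 * (i + 1) = j + 1 := by omega
        have e2 : 2 * (i + 1) + 2 = j + 3 := by omega
        rw [e2, e1]
        have hmono : tseq f (j + 2) ≤ tseq f (j + 3) :=
          (tseq_strictMono f).monotone (by omega)
        constructor <;> omega
      · refine ⟨i, by omega, fun a ha => ?_⟩
        obtain ⟨p, hp1, hp2, hp3⟩ := hpt 0 a ha
        have hp3' : p ≤ u 1 := hp3
        refine ⟨p, hp1, ?_⟩
        rw [Set.mem_Ico]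
        have e2 : 2 * i + 2 = j + 1 := by omega
        have hmono : tseq f (2 * i) ≤ tseq f j :=
          (tseq_strictMono f).monotone (by omega)
        push_neg at hcut
        rw [e2]
        constructor <;> omega
  -- every basic set of the candidate filter is infinite
  have hIinf : ∀ E : Finset ↥R, ∀ n : ℕ,
      ((⋂ a ∈ E, bIdx f '' (↑a : Set ℕ)) \ Set.Iio n).Infinite := by
    intro E n
    have hSinf : {i : ℕ | ∀ a : ↥R, a ∈ E →
        ((↑a : Set ℕ) ∩ Set.Ico (tseq f (2 * i)) (tseq f (2 * i + 2))).Nonempty}.Infinite := by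
      apply Set.infinite_of_not_bddAbove
      rintro ⟨b, hb⟩
      obtain ⟨i, hiN, hiprop⟩ := hblk E (b + 1)
      have : i ≤ b := hb hiprop
      omega
    have hsub : {i : ℕ | ∀ a : ↥R, a ∈ E →
        ((↑a : Set ℕ) ∩ Set.Ico (tseq f (2 * i)) (tseq f (2 * i + 2))).Nonempty} ⊆
        ⋂ a ∈ E, bIdx f '' (↑a : Set ℕ) := by
      intro i hi
      rw [Set.mem_iInter₂]
      intro a ha
      obtain ⟨m, hma, hmI⟩ := hi a ha
      rw [Set.mem_Ico] at hmI
      exact ⟨m, hma, bIdx_eq f hmI.1 hmI.2⟩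
    exact (hSinf.diff (Set.finite_Iio n)).mono (Set.diff_subset_diff_left hsub)
  have hFinf : ∀ s ∈ Fcand R (bIdx f), s.Infinite := by
    rintro s ⟨E, n, hsub⟩
    exact (hIinf E n).mono hsub
  -- the candidate filter decides every set
  have hdec : ∀ x : Set ℕ, x ∈ Fcand R (bIdx f) ∨ xᶜ ∈ Fcand R (bIdx f) := by
    intro x
    obtain ⟨a, haR, hcase⟩ := hreap (bIdx f ⁻¹' x)
    rcases hcase with hc | hc
    · left
      have himg : (bIdx f '' a) \ x ⊆ bIdx f '' (a \ bIdx f ⁻¹' x) := by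
        rintro i ⟨⟨m, hma, rfl⟩, hix⟩
        exact ⟨m, ⟨hma, hix⟩, rfl⟩
      have hfin2 : ((bIdx f '' a) \ x).Finite := (hc.image (bIdx f)).subset himg
      obtain ⟨bd, hbd⟩ := hfin2.bddAbove
      refine ⟨{⟨a, haR⟩}, bd + 1, ?_⟩
      rintro i ⟨hiI, hin⟩
      rw [Set.mem_iInter₂] at hiI
      have hia : i ∈ bIdx f '' a := hiI ⟨a, haR⟩ (Finset.mem_singleton_self _)
      simp only [Set.mem_Iio, not_lt] at hin
      by_contra hix
      have : i ≤ bd := hbd ⟨hia, hix⟩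
      omega
    · right
      have himg : (bIdx f '' a) \ xᶜ ⊆ bIdx f '' (a ∩ bIdx f ⁻¹' x) := by
        rintro i ⟨⟨m, hma, rfl⟩, hix⟩
        rw [Set.mem_compl_iff, not_not] at hix
        exact ⟨m, ⟨hma, hix⟩, rfl⟩
      have hfin2 : ((bIdx f '' a) \ xᶜ).Finite := (hc.image (bIdx f)).subset himg
      obtain ⟨bd, hbd⟩ := hfin2.bddAbove
      refine ⟨{⟨a, haR⟩}, bd + 1, ?_⟩
      rintro i ⟨hiI, hin⟩
      rw [Set.mem_iInter₂] at hiI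
      have hia : i ∈ bIdx f '' a := hiI ⟨a, haR⟩ (Finset.mem_singleton_self _)
      simp only [Set.mem_Iio, not_lt] at hin
      by_contra hix
      have : i ≤ bd := hbd ⟨hia, hix⟩
      omega
  have hproper : ∀ x : Set ℕ, x ∈ Fcand R (bIdx f) → xᶜ ∈ Fcand R (bIdx f) → False := by
    intro x h1 h2
    have h3 := Filter.inter_mem h1 h2
    rw [Set.inter_compl_self] at h3
    exact (hFinf ∅ h3) Set.finite_empty
  -- ultrafilter
  set U : Ultrafilter ℕ := Ultrafilter.ofComplNotMemIff (Fcand R (bIdx f)) (by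
    intro s
    constructor
    · intro h
      rcases hdec s with h1 | h1
      · exact h1
      · exact absurd h1 h
    · intro hs hc
      exact hproper s hs hc) with hU
  have humem : ∀ s : Set ℕ, s ∈ U ↔ s ∈ Fcand R (bIdx f) := fun s => Iff.rfl
  -- base
  set B : Set (Set ℕ) := Set.range (fun p : Finset ↥R × ℕ =>
    (⋂ a ∈ p.1, bIdx f '' (↑a : Set ℕ)) \ Set.Iio p.2) with hB
  have hUB : frakU ≤ #B := by
    apply csInf_le'
    refine ⟨U, B, rfl, ?_, ?_, ?_⟩
    · intro s hs
      exact hFinf s ((humem s).mp hs)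
    · rintro b ⟨⟨E, n⟩, rfl⟩
      exact (humem _).mpr ⟨E, n, subset_rfl⟩
    · intro s hs
      obtain ⟨E, n, hsub⟩ := (humem s).mp hs
      exact ⟨_, ⟨(E, n), rfl⟩, hsub⟩
  have hBcard : #B ≤ #↥R := by
    have hb1 : #B ≤ #(Finset ↥R × ℕ) := Cardinal.mk_range_le
    have hb2 : #(Finset ↥R × ℕ) = #(Finset ↥R) * #ℕ := by
      rw [Cardinal.mk_prod, Cardinal.lift_id, Cardinal.lift_id]
    have hb3 : #(Finset ↥R) = #↥R := Cardinal.mk_finset_of_infinite ↥R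
    have hinfR : ℵ₀ ≤ #↥R := Cardinal.infinite_iff.mp ‹Infinite ↥R›
    have hb4 : #↥R * #ℕ = #↥R := by
      rw [Cardinal.mk_nat, Cardinal.mul_eq_max hinfR le_rfl]
      exact max_eq_left hinfR
    calc #B ≤ #(Finset ↥R) * #ℕ := hb1.trans_eq hb2
    _ = #↥R * #ℕ := by rw [hb3]
    _ = #↥R := hb4
  exact hUB.trans hBcard

/-- `min {𝔡, 𝔯} = min {𝔡, 𝔲}`. -/
theorem stmt4 : min frakD frakR = min frakD frakU := by
  apply le_antisymm
  · -- easy direction: 𝔯 ≤ 𝔲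
    have hRU : frakR ≤ frakU := by
      apply le_csInf
      · refine ⟨_, Filter.hyperfilter ℕ, {s | s ∈ Filter.hyperfilter ℕ}, rfl, ?_,
          fun b hb => hb, fun s hs => ⟨s, hs, subset_rfl⟩⟩
        intro s hs
        by_contra hfin
        rw [Set.not_infinite] at hfin
        exact (Filter.notMem_hyperfilter_of_finite hfin) hs
      · rintro κ ⟨u, B, rfl, hinf, hBu, hbase⟩
        apply csInf_le'
        refine ⟨B, rfl, fun b hb => hinf b (hBu b hb), ?_⟩
        intro x
        by_cases hx : x ∈ u
        · obtain ⟨b, hbB, hbx⟩ := hbase x hx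
          refine ⟨b, hbB, Or.inl ?_⟩
          rw [Set.diff_eq_empty.mpr hbx]
          exact Set.finite_empty
        · have hxc : xᶜ ∈ u := Ultrafilter.compl_mem_iff_notMem.mpr hx
          obtain ⟨b, hbB, hbx⟩ := hbase xᶜ hxc
          refine ⟨b, hbB, Or.inr ?_⟩
          have hbe : b ∩ x = ∅ := by
            apply Set.eq_empty_iff_forall_notMem.mpr
            rintro m ⟨hmb, hmx⟩
            exact (hbx hmb) hmx
          rw [hbe]
          exact Set.finite_empty
    exact min_le_min_left _ hRU
  · apply le_min (min_le_left _ _)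
    apply le_csInf
    · refine ⟨_, {x : Set ℕ | x.Infinite}, rfl, fun a ha => ha, ?_⟩
      intro x
      by_cases hx : x.Infinite
      · exact ⟨x, hx, Or.inl (by simp)⟩
      · rw [Set.not_infinite] at hx
        refine ⟨xᶜ, hx.infinite_compl, Or.inr ?_⟩
        rw [Set.compl_inter_self]
        exact Set.finite_empty
    · rintro κ ⟨R, rfl, hinf, hreap⟩
      rcases le_or_gt frakD #R with h | h
      · exact le_trans (min_le_left _ _) h
      · exact le_trans (min_le_right _ _) (key_lemma R hinf hreap h)
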